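/- Let ζ be a primitive element of F_{q^n} and 1 ≤ w ≤ n with (q,w) ≠ (2,n). Then for all k ∈ Z/(q^n−1)Z, the characteristic elementary symmetric function satisfies σ_w(ζ^k) = F_ζ[δ_w](k), where δ_w is the indicator function of Ω(w) and F_ζ is the DFT based on ζ. -/

import Mathlib

/-- The discrete Fourier transform based on `ζ`: `F_ζ[f](i) = ∑_j f(j) ζ^{ij}`. -/
def dft {K : Type*} [CommRing K] (N : ℕ) (ζ : K) (f : ZMod N → K) (i : ZMod N) : K :=
  ∑ j ∈ Finset.range N, f (j : ZMod N) * ζ ^ (i.val * j)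

/-- `inOmega q n w j` : `j` is a sum of `w` distinct `q`-powers `q^i` with `0 ≤ i ≤ n-1`. -/
def inOmega (q n w j : ℕ) : Prop :=
  ∃ s : Finset (Fin n), s.card = w ∧ j = ∑ i ∈ s, q ^ (i : ℕ)

open scoped Classical in
/-- The indicator function `δ_w : ℤ/(qⁿ-1)ℤ → K` of `Ω(w)`. -/
noncomputable def deltaFun {K : Type*} [CommRing K] (q n w : ℕ)
    (k : ZMod (q ^ n - 1)) : K :=
  if inOmega q n w k.val then 1 else 0

/-- The `w`-th characteristic elementary symmetric function
`σ_w(ξ) = ∑_{0 ≤ i_1 < ⋯ < i_w ≤ n-1} ξ^{q^{i_1} + ⋯ + q^{i_w}}`. -/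
def sigmaCES {K : Type*} [CommRing K] (q n w : ℕ) (ξ : K) : K :=
  ∑ s ∈ Finset.univ.filter (fun s : Finset (Fin n) => s.card = w), ξ ^ (∑ i ∈ s, q ^ (i : ℕ))

/-- Geometric sum identity over ℕ. -/
lemma geom_nat {q : ℕ} (hq : 1 ≤ q) (n : ℕ) :
    (q - 1) * ∑ i ∈ Finset.range n, q ^ i = q ^ n - 1 := by
  have h1 : 1 ≤ q ^ n := Nat.one_le_pow _ _ hq
  have := mul_geom_sum (R := ℤ) (q : ℤ) n
  zify [hq, h1]
  push_cast at this ⊢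
  linarith [this]

/-- The key bound: a sum of `w` distinct `q`-powers below `q^n` is `< q^n - 1`
unless `q = 2` and `w = n`. -/
lemma sum_pow_lt {q n w : ℕ} (hq : 2 ≤ q) (hw1 : 1 ≤ w) (hqw : ¬ (q = 2 ∧ w = n))
    (s : Finset (Fin n)) (hcard : s.card = w) :
    (∑ i ∈ s, q ^ (i : ℕ)) < q ^ n - 1 := by
  have hT : ∑ i ∈ (Finset.univ : Finset (Fin n)), q ^ (i : ℕ)
      = ∑ i ∈ Finset.range n, q ^ i := Fin.sum_univ_eq_sum_range _ _
  have hgeom := geom_nat (le_trans one_le_two hq) n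
  have hsub : (∑ i ∈ s, q ^ (i : ℕ)) ≤ ∑ i ∈ Finset.range n, q ^ i := by
    rw [← hT]
    exact Finset.sum_le_sum_of_subset (Finset.subset_univ s)
  have hne : s.Nonempty := Finset.card_pos.mp (hcard ▸ hw1)
  obtain ⟨a, ha⟩ := hne
  have hpos : 1 ≤ ∑ i ∈ s, q ^ (i : ℕ) :=
    le_trans (Nat.one_le_pow _ _ (lt_of_lt_of_le two_pos hq))
      (Finset.single_le_sum (f := fun i : Fin n => q ^ (i : ℕ))
        (fun i _ => Nat.zero_le _) ha)
  rcases eq_or_lt_of_le hq with hq2 | hq3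
  · -- q = 2
    have hwne : w ≠ n := fun h => hqw ⟨hq2.symm, h⟩
    have hsne : s ≠ Finset.univ := by
      intro h
      apply hwne
      rw [← hcard, h, Finset.card_univ, Fintype.card_fin]
    obtain ⟨b, hb⟩ : ∃ b, b ∉ s := by
      by_contra h
      push_neg at h
      exact hsne (Finset.eq_univ_iff_forall.mpr h)
    have hins : (∑ i ∈ s, q ^ (i : ℕ)) + q ^ (b : ℕ)
        ≤ ∑ i ∈ Finset.range n, q ^ i := by
      rw [← hT]
      have h1 : ∑ i ∈ insert b s, q ^ (i : ℕ) = q ^ (b : ℕ) + ∑ i ∈ s, q ^ (i : ℕ) :=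
        Finset.sum_insert hb
      have h2 : ∑ i ∈ insert b s, q ^ (i : ℕ) ≤ ∑ i ∈ (Finset.univ : Finset (Fin n)), q ^ (i : ℕ) :=
        Finset.sum_le_sum_of_subset (Finset.subset_univ _)
      rw [h1] at h2
      omega
    have hbpos : 1 ≤ q ^ (b : ℕ) := Nat.one_le_pow _ _ (by omega)
    have hTeq : ∑ i ∈ Finset.range n, q ^ i = q ^ n - 1 := by
      rw [← hgeom, ← hq2]; ring
    omega
  · -- q ≥ 3
    have h2 : 2 * (∑ i ∈ s, q ^ (i : ℕ)) ≤ q ^ n - 1 := by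
      calc 2 * (∑ i ∈ s, q ^ (i : ℕ)) ≤ (q - 1) * (∑ i ∈ Finset.range n, q ^ i) :=
            Nat.mul_le_mul (by omega) hsub
        _ = q ^ n - 1 := hgeom
    omega

theorem sigma_eq_dft_delta
    {F K : Type*} [Field F] [Fintype F] [Field K] [Fintype K] [Algebra F K]
    (n w : ℕ) (hn : 2 ≤ n) (hcard : Fintype.card K = Fintype.card F ^ n)
    (ζ : K) (hζ : orderOf ζ = Fintype.card K - 1)
    (hw1 : 1 ≤ w) (hwn : w ≤ n) (hqw : ¬ (Fintype.card F = 2 ∧ w = n)) :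
    ∀ k : ZMod (Fintype.card F ^ n - 1),
      sigmaCES (Fintype.card F) n w (ζ ^ k.val) =
        dft (Fintype.card F ^ n - 1) ζ (deltaFun (Fintype.card F) n w) k := by
  classical
  intro k
  have hq : 2 ≤ Fintype.card F := Fintype.one_lt_card
  have hqn : 4 ≤ Fintype.card F ^ n := by
    calc (4 : ℕ) = 2 ^ 2 := rfl
      _ ≤ 2 ^ n := Nat.pow_le_pow_right (by omega) hn
      _ ≤ Fintype.card F ^ n := Nat.pow_le_pow_left hq n
  haveI : NeZero (Fintype.card F ^ n - 1) := ⟨by omega⟩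
  unfold sigmaCES dft deltaFun
  have hstep : ∀ j ∈ Finset.range (Fintype.card F ^ n - 1),
      (if inOmega (Fintype.card F) n w ((j : ZMod (Fintype.card F ^ n - 1)).val) then (1 : K)
        else 0) * ζ ^ (k.val * j)
      = if inOmega (Fintype.card F) n w j then ζ ^ (k.val * j) else 0 := by
    intro j hj
    rw [ZMod.val_natCast_of_lt (Finset.mem_range.mp hj)]
    split <;> simp
  rw [Finset.sum_congr rfl hstep, ← Finset.sum_filter]
  refine Finset.sum_bij (fun s _ => ∑ i ∈ s, Fintype.card F ^ (i : ℕ)) ?_ ?_ ?_ ?_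
  · intro s hs
    rw [Finset.mem_filter] at hs ⊢
    refine ⟨Finset.mem_range.mpr (sum_pow_lt hq hw1 hqw s hs.2), s, hs.2, rfl⟩
  · intro s₁ hs₁ s₂ hs₂ h
    have hinj := Finset.geomSum_injective (n := Fintype.card F) hq
    have h1 : ∑ i ∈ s₁.image (Fin.val), Fintype.card F ^ i
        = ∑ i ∈ s₂.image (Fin.val), Fintype.card F ^ i := by
      rw [Finset.sum_image (fun a _ b _ h => Fin.val_injective h),
        Finset.sum_image (fun a _ b _ h => Fin.val_injective h)]
      exact h
    exact Finset.image_injective Fin.val_injective (hinj h1)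
  · intro j hj
    rw [Finset.mem_filter] at hj
    obtain ⟨s, hsc, hsum⟩ := hj.2
    exact ⟨s, Finset.mem_filter.mpr ⟨Finset.mem_univ _, hsc⟩, hsum.symm⟩
  · intro s hs
    rw [← pow_mul]
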